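/- Let β be a permutation of Ω fixing F₁ and F₂ setwise (the two orbits of the cyclic half of the regular dihedral group R_r ≤ G = ⟨R_r, R_r^π⟩), and let u, v ∈ Ω. Suppose there is a G-invariant partition D such that: (i) some g ∈ G satisfies (D_u, D_v)β = (D_u, D_v)g (as an action on blocks), and (ii) the block D_v lies within a single orbit of G_u. Then there exists h ∈ G with (u,v)β = (u,v)h. -/

import Mathlib

open Equiv Set

namespace Stmt13Aux

variable {Ω : Type*}

lemma mul_image (σ τ : Equiv.Perm Ω) (s : Set Ω) :
    ⇑(σ * τ) '' s = ⇑σ '' (⇑τ '' s) := by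
  rw [Equiv.Perm.coe_mul, Set.image_comp]

lemma inv_img (e : Equiv.Perm Ω) {A B : Set Ω} (h : ⇑e '' A = B) : ⇑e⁻¹ '' B = A := by
  rw [← h, ← mul_image]; simp

/-- setwise stabilizer of a set as a subgroup of `Perm Ω`. -/
def stab (F : Set Ω) : Subgroup (Equiv.Perm Ω) where
  carrier := {σ | ⇑σ '' F = F}
  one_mem' := by simp
  mul_mem' := by
    intro a b ha hb
    show ⇑(a * b) '' F = F
    rw [mul_image]
    show ⇑a '' (⇑b '' F) = F
    rw [hb, ha]
  inv_mem' := by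
    intro a ha
    exact inv_img a ha

lemma mem_stab {F : Set Ω} {σ : Equiv.Perm Ω} : σ ∈ stab F ↔ ⇑σ '' F = F := Iff.rfl

/-- permutations preserving the (unordered) pair of sets F₁, F₂. -/
def pres (F₁ F₂ : Set Ω) : Subgroup (Equiv.Perm Ω) where
  carrier := {σ | (⇑σ '' F₁ = F₁ ∧ ⇑σ '' F₂ = F₂) ∨ (⇑σ '' F₁ = F₂ ∧ ⇑σ '' F₂ = F₁)}
  one_mem' := by simp
  mul_mem' := by
    intro a b ha hb
    have key : ∀ s t : Set Ω, ⇑b '' s = t → ∀ t' : Set Ω, ⇑a '' t = t' → ⇑(a * b) '' s = t' := by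
      intro s t h t' h'
      rw [mul_image]
      show ⇑a '' (⇑b '' s) = t'
      rw [h, h']
    rcases ha with ⟨ha1, ha2⟩ | ⟨ha1, ha2⟩ <;> rcases hb with ⟨hb1, hb2⟩ | ⟨hb1, hb2⟩
    · exact Or.inl ⟨key _ _ hb1 _ ha1, key _ _ hb2 _ ha2⟩
    · exact Or.inr ⟨key _ _ hb1 _ ha2, key _ _ hb2 _ ha1⟩
    · exact Or.inr ⟨key _ _ hb1 _ ha1, key _ _ hb2 _ ha2⟩
    · exact Or.inl ⟨key _ _ hb1 _ ha2, key _ _ hb2 _ ha1⟩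
  inv_mem' := by
    intro a ha
    rcases ha with ⟨ha1, ha2⟩ | ⟨ha1, ha2⟩
    · exact Or.inl ⟨inv_img a ha1, inv_img a ha2⟩
    · exact Or.inr ⟨inv_img a ha2, inv_img a ha1⟩

lemma mem_pres {F₁ F₂ : Set Ω} {σ : Equiv.Perm Ω} :
    σ ∈ pres F₁ F₂ ↔
      (⇑σ '' F₁ = F₁ ∧ ⇑σ '' F₂ = F₂) ∨ (⇑σ '' F₁ = F₂ ∧ ⇑σ '' F₂ = F₁) := Iff.rfl

lemma conj_mem {C R : Subgroup (Equiv.Perm Ω)} (hCR : C ≤ R) (hidx : C.relIndex R = 2)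
    {r c : Equiv.Perm Ω} (hr : r ∈ R) (hc : c ∈ C) : r * c * r⁻¹ ∈ C := by
  have h2 : (C.subgroupOf R).index = 2 := hidx
  have hc' : (⟨c, hCR hc⟩ : R) ∈ C.subgroupOf R := Subgroup.mem_subgroupOf.mpr hc
  have key : ((⟨r, hr⟩ : R) * ⟨c, hCR hc⟩ * (⟨r, hr⟩ : R)⁻¹) ∈ C.subgroupOf R := by
    rw [Subgroup.mul_mem_iff_of_index_two h2, Subgroup.mul_mem_iff_of_index_two h2,
      inv_mem_iff]
    simp [hc']
  simpa [Subgroup.mem_subgroupOf] using key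

/-- image of an orbit under a normalizing permutation. -/
lemma img_eq {C : Subgroup (Equiv.Perm Ω)} {r : Equiv.Perm Ω} {x : Ω} {F Fb : Set Ω}
    (hFx : F = {y | ∃ c ∈ C, c x = y}) (hFb : Fb = {z | ∃ c ∈ C, c (r x) = z})
    (hconj : ∀ c ∈ C, r * c * r⁻¹ ∈ C) (hconj' : ∀ c ∈ C, r⁻¹ * c * r ∈ C) :
    ⇑r '' F = Fb := by
  ext z
  constructor
  · rintro ⟨y, hy, rfl⟩
    rw [hFx] at hy
    obtain ⟨c, hc, rfl⟩ := hy
    rw [hFb]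
    refine ⟨r * c * r⁻¹, hconj c hc, ?_⟩
    simp [Equiv.Perm.mul_apply]
  · intro hz
    rw [hFb] at hz
    obtain ⟨c, hc, rfl⟩ := hz
    refine ⟨(r⁻¹ * c * r) x, ?_, ?_⟩
    · rw [hFx]
      exact ⟨r⁻¹ * c * r, hconj' c hc, rfl⟩
    · simp [Equiv.Perm.mul_apply]

lemma R_le_pres {C R : Subgroup (Equiv.Perm Ω)} (hCR : C ≤ R) (hidx : C.relIndex R = 2)
    {F₁ F₂ : Set Ω} (hun : F₁ ∪ F₂ = Set.univ) (hdisj : Disjoint F₁ F₂)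
    (hne₁ : F₁.Nonempty) (hne₂ : F₂.Nonempty)
    (ho₁ : ∀ x ∈ F₁, F₁ = {y : Ω | ∃ c ∈ C, c x = y})
    (ho₂ : ∀ x ∈ F₂, F₂ = {y : Ω | ∃ c ∈ C, c x = y}) :
    R ≤ pres F₁ F₂ := by
  intro r hr
  obtain ⟨x₁, hx₁⟩ := hne₁
  obtain ⟨x₂, hx₂⟩ := hne₂
  have hconj : ∀ c ∈ C, r * c * r⁻¹ ∈ C := fun c hc => conj_mem hCR hidx hr hc
  have hconj' : ∀ c ∈ C, r⁻¹ * c * r ∈ C := by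
    intro c hc
    have := conj_mem hCR hidx (inv_mem hr) hc
    simpa using this
  have hmem : ∀ x : Ω, r x ∈ F₁ ∨ r x ∈ F₂ := by
    intro x
    have : r x ∈ F₁ ∪ F₂ := by rw [hun]; trivial
    exact this
  have hF₁F₂ : F₁ ≠ F₂ := by
    intro h
    exact Set.disjoint_left.mp hdisj hx₁ (h ▸ hx₁)
  have hinj : Function.Injective (⇑r '' ·) := Set.image_injective.mpr r.injective
  rcases hmem x₁ with h1 | h1 <;> rcases hmem x₂ with h2 | h2
  · -- r x₁ ∈ F₁, r x₂ ∈ F₁ : contradiction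
    have e1 : ⇑r '' F₁ = F₁ := img_eq (ho₁ x₁ hx₁) (ho₁ (r x₁) h1) hconj hconj'
    have e2 : ⇑r '' F₂ = F₁ := img_eq (ho₂ x₂ hx₂) (ho₁ (r x₂) h2) hconj hconj'
    exact absurd (hinj (e1.trans e2.symm)) hF₁F₂
  · exact Or.inl ⟨img_eq (ho₁ x₁ hx₁) (ho₁ (r x₁) h1) hconj hconj',
      img_eq (ho₂ x₂ hx₂) (ho₂ (r x₂) h2) hconj hconj'⟩
  · exact Or.inr ⟨img_eq (ho₁ x₁ hx₁) (ho₂ (r x₁) h1) hconj hconj',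
      img_eq (ho₂ x₂ hx₂) (ho₁ (r x₂) h2) hconj hconj'⟩
  · -- r x₁ ∈ F₂, r x₂ ∈ F₂ : contradiction
    have e1 : ⇑r '' F₁ = F₂ := img_eq (ho₁ x₁ hx₁) (ho₂ (r x₁) h1) hconj hconj'
    have e2 : ⇑r '' F₂ = F₂ := img_eq (ho₂ x₂ hx₂) (ho₂ (r x₂) h2) hconj hconj'
    exact absurd (hinj (e1.trans e2.symm)) hF₁F₂

/-- An element of `R` preserving `F₁` setwise lies in `C`. -/
lemma mem_C_core {C R : Subgroup (Equiv.Perm Ω)} (hCR : C ≤ R) (hidx : C.relIndex R = 2)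
    {F₁ F₂ : Set Ω} (hdisj : Disjoint F₁ F₂)
    (hne₁ : F₁.Nonempty) (hne₂ : F₂.Nonempty)
    (ho₁ : ∀ x ∈ F₁, F₁ = {y : Ω | ∃ c ∈ C, c x = y})
    (reg : ∀ x y : Ω, ∃! g : R, (g : Equiv.Perm Ω) x = y)
    {r : Equiv.Perm Ω} (hr : r ∈ R) (hrF : ⇑r '' F₁ = F₁) : r ∈ C := by
  obtain ⟨x₁, hx₁⟩ := hne₁
  obtain ⟨x₂, hx₂⟩ := hne₂
  set T : Subgroup (Equiv.Perm Ω) := R ⊓ stab F₁ with hT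
  have hCT : C ≤ T := by
    intro c hc
    refine ⟨hCR hc, ?_⟩
    have hcx : c x₁ ∈ F₁ := by
      rw [ho₁ x₁ hx₁]; exact ⟨c, hc, rfl⟩
    exact img_eq (ho₁ x₁ hx₁) (ho₁ (c x₁) hcx)
      (fun d hd => mul_mem (mul_mem hc hd) (inv_mem hc))
      (fun d hd => mul_mem (mul_mem (inv_mem hc) hd) hc)
  have hTR : T ≤ R := inf_le_left
  -- an element of R not in T
  obtain ⟨b, hbx⟩ := (reg x₁ x₂).exists
  have hbT : ¬ ((b : Equiv.Perm Ω) ∈ T) := by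
    rintro ⟨-, hbs⟩
    have : x₂ ∈ F₁ := by
      rw [← hbs]; exact ⟨x₁, hx₁, hbx⟩
    exact Set.disjoint_left.mp hdisj this hx₂
  have hmul : C.relIndex T * T.relIndex R = 2 := by
    rw [Subgroup.relIndex_mul_relIndex C T R hCT hTR, hidx]
  have hn1 : T.relIndex R ≠ 1 := by
    intro h
    exact hbT (Subgroup.relIndex_eq_one.mp h b.2)
  have hd2 : T.relIndex R ∣ 2 := Dvd.intro_left _ hmul
  have hn2 : T.relIndex R = 2 := ((Nat.dvd_prime Nat.prime_two).mp hd2).resolve_left hn1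
  have hm1 : C.relIndex T = 1 := by
    rw [hn2] at hmul; omega
  exact Subgroup.relIndex_eq_one.mp hm1 ⟨hr, hrF⟩

/-- In a finite cyclic group, subgroups with the same cardinality coincide. -/
lemma cyclic_subgroup_unique {Γ : Type*} [Group Γ] [Finite Γ] [IsCyclic Γ]
    (A B : Subgroup Γ) (h : Nat.card A = Nat.card B) : A = B := by
  classical
  have hcomm : ∀ x y : Γ, x * y = y * x := by
    obtain ⟨g, hg⟩ := IsCyclic.exists_generator (α := Γ)
    intro x y
    obtain ⟨i, rfl⟩ := hg x
    obtain ⟨j, rfl⟩ := hg y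
    exact zpow_mul_comm g i j
  letI : Fintype Γ := Fintype.ofFinite Γ
  let Smem : ℕ → Subgroup Γ := fun m =>
    { carrier := {x | x ^ m = 1}
      one_mem' := one_pow m
      mul_mem' := by
        intro a b ha hb
        show (a * b) ^ m = 1
        have hab : Commute a b := hcomm a b
        rw [hab.mul_pow, ha, hb, one_mul]
      inv_mem' := by
        intro a ha
        show a⁻¹ ^ m = 1
        rw [inv_pow, ha, inv_one] }
  have key : ∀ A : Subgroup Γ, A = Smem (Nat.card A) := by
    intro A
    have hm : 0 < Nat.card A := Nat.card_pos
    have hle : A ≤ Smem (Nat.card A) := by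
      intro x hx
      have hp : (⟨x, hx⟩ : A) ^ (Nat.card A) = 1 := pow_card_eq_one'
      show x ^ (Nat.card A) = 1
      have := congrArg (Subtype.val) hp
      simp only [SubgroupClass.coe_pow, OneMemClass.coe_one] at this
      exact this
    refine Subgroup.eq_of_le_of_card_ge hle ?_
    have hcard : Nat.card (Smem (Nat.card A)) ≤ Nat.card A := by
      have hle2 := IsCyclic.card_pow_eq_one_le (α := Γ) hm
      calc Nat.card (Smem (Nat.card A))
          = Fintype.card {x : Γ // x ^ (Nat.card A) = 1} := Nat.card_eq_fintype_card
        _ = Finset.card {a : Γ | a ^ (Nat.card A) = 1} := Fintype.card_subtype _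
        _ ≤ Nat.card A := hle2
    exact hcard
  rw [key A, key B, h]

end Stmt13Aux


/-- A pair of regular dihedral permutation groups of squarefree order 2k on Ω
whose cyclic index-2 halves share the same two orbits F₁, F₂. -/
structure DihedralPairSetup (Ω : Type*) where
  R₁ : Subgroup (Equiv.Perm Ω)
  R₂ : Subgroup (Equiv.Perm Ω)
  C₁ : Subgroup (Equiv.Perm Ω)
  C₂ : Subgroup (Equiv.Perm Ω)
  F₁ : Set Ω
  F₂ : Set Ω
  k : ℕ
  k_odd : Odd k
  k_squarefree : Squarefree k
  k_ge : 3 ≤ k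
  card_eq : Nat.card Ω = 2 * k
  dih₁ : Nonempty (R₁ ≃* DihedralGroup k)
  dih₂ : Nonempty (R₂ ≃* DihedralGroup k)
  reg₁ : ∀ x y : Ω, ∃! g : R₁, (g : Equiv.Perm Ω) x = y
  reg₂ : ∀ x y : Ω, ∃! g : R₂, (g : Equiv.Perm Ω) x = y
  hC₁ : C₁ ≤ R₁
  hC₂ : C₂ ≤ R₂
  cyc₁ : IsCyclic C₁
  cyc₂ : IsCyclic C₂
  idx₁ : C₁.relIndex R₁ = 2
  idx₂ : C₂.relIndex R₂ = 2
  union_eq : F₁ ∪ F₂ = Set.univ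
  disj : Disjoint F₁ F₂
  ne₁ : F₁.Nonempty
  ne₂ : F₂.Nonempty
  orb₁ : ∀ x ∈ F₁, F₁ = {y : Ω | ∃ g ∈ C₁, g x = y}
  orb₁' : ∀ x ∈ F₂, F₂ = {y : Ω | ∃ g ∈ C₁, g x = y}
  orb₂ : ∀ x ∈ F₁, F₁ = {y : Ω | ∃ g ∈ C₂, g x = y}
  orb₂' : ∀ x ∈ F₂, F₂ = {y : Ω | ∃ g ∈ C₂, g x = y}

/-- 2-closure membership criterion: if β fixes F₁, F₂ setwise, agrees with
some g ∈ G on the blocks D_u, D_v of a G-invariant partition D, and D_v lies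
in a single orbit of G_u, then β agrees with some h ∈ G on the pair (u, v). -/
theorem stmt_13 {Ω : Type*} (S : DihedralPairSetup Ω)
    (G : Subgroup (Equiv.Perm Ω)) (hG : G = S.R₁ ⊔ S.R₂)
    (D : Set (Set Ω)) (hD : Setoid.IsPartition D)
    (hDinv : ∀ d ∈ D, ∀ g ∈ G, (⇑g) '' d ∈ D)
    (β : Equiv.Perm Ω)
    (hβ₁ : ∀ x ∈ S.F₁, β x ∈ S.F₁) (hβ₂ : ∀ x ∈ S.F₂, β x ∈ S.F₂)
    (u v : Ω) (Du Dv : Set Ω) (hDu : Du ∈ D) (hDv : Dv ∈ D)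
    (huDu : u ∈ Du) (hvDv : v ∈ Dv)
    (hg : ∃ g ∈ G, (⇑β) '' Du = (⇑g) '' Du ∧ (⇑β) '' Dv = (⇑g) '' Dv)
    (horb : ∃ w : Ω, Dv ⊆ {z : Ω | ∃ g ∈ G, g u = u ∧ g w = z}) :
    ∃ h ∈ G, β u = h u ∧ β v = h v := by
  classical
  obtain ⟨g, hgG, hgDu, hgDv⟩ := hg
  obtain ⟨w, hw⟩ := horb
  haveI hfin : Finite Ω := Nat.finite_of_card_ne_zero (by
    rw [S.card_eq]
    have := S.k_ge
    omega)
  have block_eq : ∀ d₁ ∈ D, ∀ d₂ ∈ D, ∀ x : Ω, x ∈ d₁ → x ∈ d₂ → d₁ = d₂ := by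
    intro d₁ h₁ d₂ h₂ x hx₁ hx₂
    obtain ⟨b, -, hbu⟩ := hD.2 x
    rw [hbu d₁ ⟨h₁, hx₁⟩, hbu d₂ ⟨h₂, hx₂⟩]
  have hR₁G : S.R₁ ≤ G := by rw [hG]; exact le_sup_left
  have hβu : β u ∈ ⇑g '' Du := by rw [← hgDu]; exact ⟨u, huDu, rfl⟩
  obtain ⟨u', hu'Du, hgu'⟩ := hβu
  have hβv : β v ∈ ⇑g '' Dv := by rw [← hgDv]; exact ⟨v, hvDv, rfl⟩
  obtain ⟨v', hv'Dv, hgv'⟩ := hβv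
  obtain ⟨r, hru⟩ := (S.reg₁ u u').exists
  set rp : Equiv.Perm Ω := (r : Equiv.Perm Ω) with hrp
  have hrR : rp ∈ S.R₁ := r.2
  have hrG : rp ∈ G := hR₁G hrR
  obtain ⟨a, hau⟩ := (S.reg₁ u v).exists
  set ap : Equiv.Perm Ω := (a : Equiv.Perm Ω) with hap
  have haR : ap ∈ S.R₁ := a.2
  have haG : ap ∈ G := hR₁G haR
  have haDu : ⇑ap '' Du = Dv :=
    block_eq _ (hDinv Du hDu ap haG) _ hDv v ⟨u, huDu, hau⟩ hvDv
  have hrDu : ⇑rp '' Du = Du :=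
    block_eq _ (hDinv Du hDu rp hrG) _ hDu u' ⟨u, huDu, hru⟩ hu'Du
  have hGP : G ≤ Stmt13Aux.pres S.F₁ S.F₂ := by
    rw [hG]
    exact sup_le
      (Stmt13Aux.R_le_pres S.hC₁ S.idx₁ S.union_eq S.disj S.ne₁ S.ne₂ S.orb₁ S.orb₁')
      (Stmt13Aux.R_le_pres S.hC₂ S.idx₂ S.union_eq S.disj S.ne₁ S.ne₂ S.orb₂ S.orb₂')
  have huniv : ∀ x : Ω, x ∈ S.F₁ ∨ x ∈ S.F₂ := fun x => by
    have : x ∈ S.F₁ ∪ S.F₂ := by rw [S.union_eq]; trivial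
    exact this
  have hfix : ∀ σ : Equiv.Perm Ω, σ ∈ G → σ u = u →
      ⇑σ '' S.F₁ = S.F₁ ∧ ⇑σ '' S.F₂ = S.F₂ := by
    intro σ hσ hσu
    rcases hGP hσ with h | ⟨h1, h2⟩
    · exact h
    · exfalso
      rcases huniv u with hu1 | hu2
      · have h3 : u ∈ S.F₂ := by rw [← h1]; exact ⟨u, hu1, hσu⟩
        exact Set.disjoint_left.mp S.disj hu1 h3
      · have h3 : u ∈ S.F₁ := by rw [← h2]; exact ⟨u, hu2, hσu⟩
        exact Set.disjoint_left.mp S.disj h3 hu2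
  have hDvF : Dv ⊆ S.F₁ ∨ Dv ⊆ S.F₂ := by
    rcases huniv w with hw1 | hw2
    · left; intro z hz
      obtain ⟨s, hsG, hsu, hsw⟩ := hw hz
      have h1 := (hfix s hsG hsu).1
      rw [← h1]; exact ⟨w, hw1, hsw⟩
    · right; intro z hz
      obtain ⟨s, hsG, hsu, hsw⟩ := hw hz
      have h1 := (hfix s hsG hsu).2
      rw [← h1]; exact ⟨w, hw2, hsw⟩
  have hDu' : Du = ⇑ap⁻¹ '' Dv := (Stmt13Aux.inv_img ap haDu).symm
  have hDuF : Du ⊆ S.F₁ ∨ Du ⊆ S.F₂ := by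
    rcases hGP haG with ⟨h1, h2⟩ | ⟨h1, h2⟩ <;> rcases hDvF with hv1 | hv1
    · left
      rw [hDu', ← Stmt13Aux.inv_img ap h1]
      exact Set.image_mono hv1
    · right
      rw [hDu', ← Stmt13Aux.inv_img ap h2]
      exact Set.image_mono hv1
    · right
      rw [hDu', ← Stmt13Aux.inv_img ap h2]
      exact Set.image_mono hv1
    · left
      rw [hDu', ← Stmt13Aux.inv_img ap h1]
      exact Set.image_mono hv1
  have hrC : rp ∈ S.C₁ := by
    rcases hDuF with hF | hF
    · have h1 : rp u ∈ S.F₁ := by rw [hru]; exact hF hu'Du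
      have hrF : ⇑rp '' S.F₁ = S.F₁ := by
        rcases hGP hrG with h | ⟨hh1, hh2⟩
        · exact h.1
        · exfalso
          have h3 : rp u ∈ S.F₂ := by rw [← hh1]; exact ⟨u, hF huDu, rfl⟩
          exact Set.disjoint_left.mp S.disj h1 h3
      exact Stmt13Aux.mem_C_core S.hC₁ S.idx₁ S.disj S.ne₁ S.ne₂ S.orb₁ S.reg₁ hrR hrF
    · have h1 : rp u ∈ S.F₂ := by rw [hru]; exact hF hu'Du
      have hrF : ⇑rp '' S.F₁ = S.F₁ := by
        rcases hGP hrG with h | ⟨hh1, hh2⟩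
        · exact h.1
        · exfalso
          have h3 : rp u ∈ S.F₁ := by rw [← hh2]; exact ⟨u, hF huDu, rfl⟩
          exact Set.disjoint_left.mp S.disj h3 h1
      exact Stmt13Aux.mem_C_core S.hC₁ S.idx₁ S.disj S.ne₁ S.ne₂ S.orb₁ S.reg₁ hrR hrF
  set A : Subgroup (Equiv.Perm Ω) := S.C₁ ⊓ Stmt13Aux.stab Du with hA
  set B : Subgroup (Equiv.Perm Ω) := S.C₁ ⊓ Stmt13Aux.stab Dv with hB
  have hmap : B = Subgroup.map (MulAut.conj ap).toMonoidHom A := by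
    ext σ
    simp only [Subgroup.mem_map, MulEquiv.coe_toMonoidHom, MulAut.conj_apply]
    constructor
    · rintro ⟨hσC, hσD⟩
      refine ⟨ap⁻¹ * σ * ap, ⟨?_, ?_⟩, ?_⟩
      · have h0 := Stmt13Aux.conj_mem S.hC₁ S.idx₁ (inv_mem haR) hσC
        simpa using h0
      · show ⇑(ap⁻¹ * σ * ap) '' Du = Du
        rw [Stmt13Aux.mul_image, Stmt13Aux.mul_image, haDu,
          (show ⇑σ '' Dv = Dv from hσD), Stmt13Aux.inv_img ap haDu]
      · group
    · rintro ⟨x, ⟨hxC, hxD⟩, rfl⟩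
      constructor
      · exact Stmt13Aux.conj_mem S.hC₁ S.idx₁ haR hxC
      · show ⇑(ap * x * ap⁻¹) '' Dv = Dv
        rw [Stmt13Aux.mul_image, Stmt13Aux.mul_image, Stmt13Aux.inv_img ap haDu,
          (show ⇑x '' Du = Du from hxD), haDu]
  have hcard : Nat.card A = Nat.card B := by
    rw [hmap]
    exact Nat.card_congr
      (Subgroup.equivMapOfInjective A _ (MulAut.conj ap).injective).toEquiv
  have hAC : A ≤ S.C₁ := inf_le_left
  have hBC : B ≤ S.C₁ := inf_le_left
  have hAB : A = B := by
    haveI := S.cyc₁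
    have h1 : A.subgroupOf S.C₁ = B.subgroupOf S.C₁ := by
      apply Stmt13Aux.cyclic_subgroup_unique
      rw [Nat.card_congr (Subgroup.subgroupOfEquivOfLe hAC).toEquiv,
        Nat.card_congr (Subgroup.subgroupOfEquivOfLe hBC).toEquiv, hcard]
    have h2 := Subgroup.subgroupOf_inj.mp h1
    rwa [inf_eq_left.mpr hAC, inf_eq_left.mpr hBC] at h2
  have hrB : rp ∈ B := by rw [← hAB]; exact ⟨hrC, hrDu⟩
  have hrDv : ⇑rp '' Dv = Dv := hrB.2
  have hrDv' : ⇑rp⁻¹ '' Dv = Dv := Stmt13Aux.inv_img rp hrDv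
  obtain ⟨s, hsG, hsu, hsw⟩ := hw hvDv
  have hv'O : rp⁻¹ v' ∈ Dv := by rw [← hrDv']; exact ⟨v', hv'Dv, rfl⟩
  obtain ⟨s', hs'G, hs'u, hs'w⟩ := hw hv'O
  refine ⟨g * (rp * (s' * s⁻¹)),
    mul_mem hgG (mul_mem hrG (mul_mem hs'G (inv_mem hsG))), ?_, ?_⟩
  · have h1 : s⁻¹ u = u := by conv_lhs => rw [← hsu]; rw [Equiv.Perm.inv_def, Equiv.symm_apply_apply]
    show β u = (g * (rp * (s' * s⁻¹))) u
    simp only [Equiv.Perm.mul_apply]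
    rw [h1, hs'u, hru, hgu']
  · have h2 : s⁻¹ v = w := by conv_lhs => rw [← hsw]; rw [Equiv.Perm.inv_def, Equiv.symm_apply_apply]
    show β v = (g * (rp * (s' * s⁻¹))) v
    simp only [Equiv.Perm.mul_apply]
    rw [h2, hs'w, Equiv.Perm.inv_def, Equiv.apply_symm_apply, hgv']
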